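/- Let v, l ∈ ℝ⁴ satisfy η_{μν} v^μ v^ν = 1, η_{μν} l^μ l^ν = −1 and η_{μν} v^μ l^ν = 0, and let μ₀, ε, ε′, E be real numbers with ε ≠ 0. Set ξ := ε′E/ε and assume 1 + ξ ≠ 0 and μ₀ ε (1+ξ) ≠ 0. Then the effective metric of a nonlinear dielectric, ĝ^{μν} := η^{μν} + (μ₀ε − 1 + μ₀ε′E) v^μ v^ν − (ε′E/ε) l^μ l^ν, has as its matrix inverse ĝ_{μν} = η_{μν} − (1 − 1/(μ₀ε(1+ξ))) v_μ v_ν + (ξ/(1+ξ)) l_μ l_ν; that is, ĝ^{μα} ĝ_{αν} = δ^μ_ν. -/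

import Mathlib

open scoped BigOperators

noncomputable section

/-- The Minkowski metric η = diag(1,-1,-1,-1) (same components for η_{μν} and η^{μν}). -/
def η (μ ν : Fin 4) : ℝ := if μ = ν then (if μ = 0 then 1 else -1) else 0

/-- the effective metric of a nonlinear dielectric
ĝ^{μν} = η^{μν} + (μ₀ε − 1 + μ₀ε′E) v^μ v^ν − (ε′E/ε) l^μ l^ν has the stated matrix inverse. -/
theorem dielectric_effective_metric_inverse
    (v l : Fin 4 → ℝ) (μ₀ ε ε' E ξ : ℝ)
    (hε : ε ≠ 0)
    (hξ : ξ = ε' * E / ε)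
    (hξ1 : 1 + ξ ≠ 0) (hμεξ : μ₀ * ε * (1 + ξ) ≠ 0)
    -- normalization and orthogonality
    (hv : ∑ μ, ∑ ν, η μ ν * v μ * v ν = 1)
    (hl : ∑ μ, ∑ ν, η μ ν * l μ * l ν = -1)
    (hvl : ∑ μ, ∑ ν, η μ ν * v μ * l ν = 0)
    -- lowered components
    (vlow llow : Fin 4 → ℝ)
    (hvlow : ∀ μ, vlow μ = ∑ ν, η μ ν * v ν)
    (hllow : ∀ μ, llow μ = ∑ ν, η μ ν * l ν)
    -- the effective metric and the claimed inverse
    (gup gdown : Fin 4 → Fin 4 → ℝ)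
    (hgup : ∀ μ ν, gup μ ν =
      η μ ν + (μ₀ * ε - 1 + μ₀ * ε' * E) * v μ * v ν - (ε' * E / ε) * l μ * l ν)
    (hgdown : ∀ μ ν, gdown μ ν =
      η μ ν - (1 - 1 / (μ₀ * ε * (1 + ξ))) * vlow μ * vlow ν
        + (ξ / (1 + ξ)) * llow μ * llow ν) :
    ∀ μ ν, ∑ α, gup μ α * gdown α ν = if μ = ν then (1 : ℝ) else 0 := by
  intro μ ν
  set A : ℝ := μ₀ * ε - 1 + μ₀ * ε' * E with hA
  set B : ℝ := ε' * E / ε with hB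
  set C : ℝ := 1 - 1 / (μ₀ * ε * (1 + ξ)) with hC
  set D : ℝ := ξ / (1 + ξ) with hD
  -- expanded scalar hypotheses
  simp (config := { decide := true }) only [Fin.sum_univ_four, η] at hv hl hvl
  norm_num at hv hl hvl
  -- contraction lemmas
  have c1 : ∑ α, η μ α * η α ν = if μ = ν then (1:ℝ) else 0 := by
    fin_cases μ <;> fin_cases ν <;> simp [Fin.sum_univ_four, η]
  have c2 : ∑ α, η μ α * vlow α = v μ := by
    simp only [hvlow]
    fin_cases μ <;> simp [Fin.sum_univ_four, η] <;> ring
  have c3 : ∑ α, η μ α * llow α = l μ := by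
    simp only [hllow]
    fin_cases μ <;> simp [Fin.sum_univ_four, η] <;> ring
  have c4 : ∑ α, v α * η α ν = vlow ν := by
    simp only [hvlow]
    fin_cases ν <;> simp [Fin.sum_univ_four, η] <;> ring
  have c5 : ∑ α, l α * η α ν = llow ν := by
    simp only [hllow]
    fin_cases ν <;> simp [Fin.sum_univ_four, η] <;> ring
  have c6 : ∑ α, v α * vlow α = 1 := by
    simp (config := { decide := true }) only [hvlow, Fin.sum_univ_four, η]
    norm_num
    linear_combination hv
  have c7 : ∑ α, v α * llow α = 0 := by
    simp (config := { decide := true }) only [hllow, Fin.sum_univ_four, η]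
    norm_num
    linear_combination hvl
  have c8 : ∑ α, l α * vlow α = 0 := by
    simp (config := { decide := true }) only [hvlow, Fin.sum_univ_four, η]
    norm_num
    linear_combination hvl
  have c9 : ∑ α, l α * llow α = -1 := by
    simp (config := { decide := true }) only [hllow, Fin.sum_univ_four, η]
    norm_num
    linear_combination hl
  -- split the sum into contractions
  have step : ∑ α, gup μ α * gdown α ν =
      (∑ α, η μ α * η α ν)
      - C * vlow ν * (∑ α, η μ α * vlow α)
      + D * llow ν * (∑ α, η μ α * llow α)
      + A * v μ * (∑ α, v α * η α ν)
      - A * C * v μ * vlow ν * (∑ α, v α * vlow α)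
      + A * D * v μ * llow ν * (∑ α, v α * llow α)
      - B * l μ * (∑ α, l α * η α ν)
      + B * C * l μ * vlow ν * (∑ α, l α * vlow α)
      - B * D * l μ * llow ν * (∑ α, l α * llow α) := by
    simp only [hgup, hgdown, Fin.sum_univ_four]
    ring
  rw [step, c1, c2, c3, c4, c5, c6, c7, c8, c9]
  have hE : ε' * E = ξ * ε := by rw [hξ, hB]; field_simp
  have hAk : A = μ₀ * ε * (1 + ξ) - 1 := by rw [hA]; linear_combination μ₀ * hE
  have hBξ : B = ξ := hξ.symm
  have hcoef1 : A - C - A * C = 0 := by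
    rw [hAk, hC]; field_simp; linear_combination (ε + ε * ξ) * (mul_inv_cancel₀ (left_ne_zero_of_mul (left_ne_zero_of_mul hμεξ)))
  have hcoef2 : D - B + B * D = 0 := by
    rw [hBξ, hD]; field_simp; ring
  linear_combination (v μ * vlow ν) * hcoef1 + (l μ * llow ν) * hcoef2
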